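/- Assume 0 < p < 1. Let (x̄*, ȳ*) be the element of minimal norm of Ω and, for each t ≥ t₀ > 0, let (x_t, y_t) be the unique saddle point of L_t. Then lim_{t→+∞} ‖(x_t, y_t) − (x̄*, ȳ*)‖ = 0, and ‖(x_t, y_t)‖ ≤ ‖(x̄*, ȳ*)‖ for all t ≥ t₀. -/

import Mathlib

open Real Set Filter MeasureTheory
open scoped RealInnerProductSpace

noncomputable section

abbrev Euc (n : ℕ) : Type := EuclideanSpace ℝ (Fin n)

/-- The Lagrangian `L(x,y) = f(x) + ⟨Kx, y⟩ − g(y)`. -/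
def Lag {n m : ℕ} (f : Euc n → ℝ) (g : Euc m → ℝ) (K : Euc n →L[ℝ] Euc m)
    (x : Euc n) (y : Euc m) : ℝ :=
  f x + ⟪K x, y⟫ - g y

/-- The augmented Lagrangian `L_t(x,y) = L(x,y) + (c/(2 t^p)) (‖x‖² − ‖y‖²)`. -/
def LagT {n m : ℕ} (f : Euc n → ℝ) (g : Euc m → ℝ) (K : Euc n →L[ℝ] Euc m)
    (c p : ℝ) (t : ℝ) (x : Euc n) (y : Euc m) : ℝ :=
  Lag f g K x y + (c / (2 * t ^ p)) * (‖x‖ ^ 2 - ‖y‖ ^ 2)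

/-- `∇_x L_t(x,y) = ∇f(x) + K* y + (c/t^p) x`. -/
def gradLx {n m : ℕ} (f : Euc n → ℝ) (K : Euc n →L[ℝ] Euc m)
    (c p : ℝ) (t : ℝ) (x : Euc n) (y : Euc m) : Euc n :=
  gradient f x + (ContinuousLinearMap.adjoint K) y + (c / t ^ p) • x

/-- `∇_y L_t(x,y) = −∇g(y) + K x − (c/t^p) y`. -/
def gradLy {n m : ℕ} (g : Euc m → ℝ) (K : Euc n →L[ℝ] Euc m)
    (c p : ℝ) (t : ℝ) (x : Euc n) (y : Euc m) : Euc m :=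
  -(gradient g y) + K x - (c / t ^ p) • y

/-- The extrapolation coefficient `θ(t)`. -/
def theta (α q γ s t : ℝ) : ℝ :=
  (t ^ (2*q+s) - 2*γ*q * t ^ (2*q-1) + γ * t ^ q) /
    ((α - 1) * (t ^ (q+s) - γ*q * t ^ (q-1)))

/-- `(xs, ys)` is a saddle point of `L`. -/
def IsSaddle {n m : ℕ} (L : Euc n → Euc m → ℝ) (xs : Euc n) (ys : Euc m) : Prop :=
  ∀ x : Euc n, ∀ y : Euc m, L xs y ≤ L xs ys ∧ L xs ys ≤ L x ys

/-- A global solution of the dynamical system (dyn), recorded together with its first and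
second derivatives `x', y', x'', y''` and the derivatives `Gx', Gy'` of the Hessian-driven
damping terms `t ↦ ∇_x L_t(x(t), y(t)+θ(t) y'(t))` and `t ↦ ∇_y L_t(x(t)+θ(t) x'(t), y(t))`. -/
structure IsDynSol {n m : ℕ} (f : Euc n → ℝ) (g : Euc m → ℝ) (K : Euc n →L[ℝ] Euc m)
    (c p α q γ s t₀ : ℝ) (x : ℝ → Euc n) (y : ℝ → Euc m)
    (x' x'' Gx' : ℝ → Euc n) (y' y'' Gy' : ℝ → Euc m) : Prop where
  hx' : ∀ t ≥ t₀, HasDerivAt x (x' t) t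
  hy' : ∀ t ≥ t₀, HasDerivAt y (y' t) t
  hx'' : ∀ t ≥ t₀, HasDerivAt x' (x'' t) t
  hy'' : ∀ t ≥ t₀, HasDerivAt y' (y'' t) t
  hx''c : ContinuousOn x'' (Ici t₀)
  hy''c : ContinuousOn y'' (Ici t₀)
  hGx' : ∀ t ≥ t₀, HasDerivAt
    (fun τ => gradLx f K c p τ (x τ) (y τ + theta α q γ s τ • y' τ)) (Gx' t) t
  hGy' : ∀ t ≥ t₀, HasDerivAt
    (fun τ => gradLy g K c p τ (x τ + theta α q γ s τ • x' τ) (y τ)) (Gy' t) t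
  heqx : ∀ t ≥ t₀, x'' t + (α / t ^ q) • x' t + γ • Gx' t
      + t ^ s • gradLx f K c p t (x t) (y t + theta α q γ s t • y' t) = 0
  heqy : ∀ t ≥ t₀, y'' t + (α / t ^ q) • y' t - γ • Gy' t
      - t ^ s • gradLy g K c p t (x t + theta α q γ s t • x' t) (y t) = 0

/-- The coefficient `a(t)`. -/
def aFun (α q γ s t : ℝ) : ℝ :=
  (2*q+s) * t ^ (2*q+s-1) - 2*γ*q*(2*q-1) * t ^ (2*q-2) + γ*q * t ^ (q-1)
    + (α-1) * (γ*q * t ^ (q-1) - t ^ (q+s))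

/-- The coefficient `l(t)` (depending on the constant `M`). -/
def lFun (α q c γ s p M t : ℝ) : ℝ :=
  M*(α-1)*(3*α-2)/2 * t ^ (-q) + (α-1)*c*γ/8 * t ^ (-p)
    - M*(α-1)*q/2 * t ^ (-1 : ℝ) - (α-1)*c/4 * t ^ (q+s-p)
    + (α-1)*c*γ*q/4 * t ^ (q-1-p) - (α-1)*q*c/(8*α) * t ^ (2*q+s-1-p)
    + (α-1)*q*(1-q)/2 * t ^ (q-2)

/-- `Δ(t) = ‖∇_x L_t(x(t), y(t)+θ(t)ẏ(t))‖² + ‖∇_y L_t(x(t)+θ(t)ẋ(t), y(t))‖²`. -/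
def DeltaFun {n m : ℕ} (f : Euc n → ℝ) (g : Euc m → ℝ) (K : Euc n →L[ℝ] Euc m)
    (c p α q γ s : ℝ) (x x' : ℝ → Euc n) (y y' : ℝ → Euc m) (t : ℝ) : ℝ :=
  ‖gradLx f K c p t (x t) (y t + theta α q γ s t • y' t)‖ ^ 2
    + ‖gradLy g K c p t (x t + theta α q γ s t • x' t) (y t)‖ ^ 2

/-- The energy function `Ê(t)` of Lemma 4.1, built from the saddle points `(x_t, y_t)` of the
augmented Lagrangians. -/
def Ehat {n m : ℕ} (f : Euc n → ℝ) (g : Euc m → ℝ) (K : Euc n →L[ℝ] Euc m)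
    (c p α q γ s : ℝ) (xt x x' : ℝ → Euc n) (yt y y' : ℝ → Euc m) (t : ℝ) : ℝ :=
  (t ^ (2*q+s) - 2*γ*q * t ^ (2*q-1) + γ * t ^ q) *
      (LagT f g K c p t (x t) (yt t) - LagT f g K c p t (xt t) (y t))
    + (1/2) * ‖(α-1) • (x t - xt t)
        + t ^ q • (x' t + γ • gradLx f K c p t (x t) (y t + theta α q γ s t • y' t))‖ ^ 2
    + (α-1)/2 * (1 - q * t ^ (q-1)) * ‖x t - xt t‖ ^ 2
    + (1/2) * ‖(α-1) • (y t - yt t)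
        + t ^ q • (y' t - γ • gradLy g K c p t (x t + theta α q γ s t • x' t) (y t))‖ ^ 2
    + (α-1)/2 * (1 - q * t ^ (q-1)) * ‖y t - yt t‖ ^ 2

/-- The energy function `E(t)` of Theorem 3.1, built from a fixed saddle point `(xs, ys)` of `L`. -/
def Efun {n m : ℕ} (f : Euc n → ℝ) (g : Euc m → ℝ) (K : Euc n →L[ℝ] Euc m)
    (c p α q γ s : ℝ) (xs : Euc n) (ys : Euc m)
    (x x' : ℝ → Euc n) (y y' : ℝ → Euc m) (t : ℝ) : ℝ :=
  (t ^ (2*q+s) - 2*γ*q * t ^ (2*q-1) + γ * t ^ q) *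
      (Lag f g K (x t) ys - Lag f g K xs (y t) + c / (2 * t ^ p) * (‖x t‖ ^ 2 + ‖y t‖ ^ 2))
    + (1/2) * ‖(α-1) • (x t - xs)
        + t ^ q • (x' t + γ • gradLx f K c p t (x t) (y t + theta α q γ s t • y' t))‖ ^ 2
    + (α-1)/2 * (1 - q * t ^ (q-1)) * ‖x t - xs‖ ^ 2
    + (1/2) * ‖(α-1) • (y t - ys)
        + t ^ q • (y' t - γ • gradLy g K c p t (x t + theta α q γ s t • x' t) (y t))‖ ^ 2
    + (α-1)/2 * (1 - q * t ^ (q-1)) * ‖y t - ys‖ ^ 2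

lemma midpoint_saddle {n m : ℕ} (f : Euc n → ℝ) (g : Euc m → ℝ) (K : Euc n →L[ℝ] Euc m)
    (hfc : ConvexOn ℝ Set.univ f) (hgc : ConvexOn ℝ Set.univ g)
    {x1 x2 : Euc n} {y1 y2 : Euc m}
    (h1 : IsSaddle (Lag f g K) x1 y1) (h2 : IsSaddle (Lag f g K) x2 y2) :
    IsSaddle (Lag f g K) ((2:ℝ)⁻¹ • (x1 + x2)) ((2:ℝ)⁻¹ • (y1 + y2)) := by
  set v1 := Lag f g K x1 y1 with hv1
  set v2 := Lag f g K x2 y2 with hv2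
  have hv : v1 = v2 :=
    le_antisymm ((h1 x2 y1).2.trans (h2 x2 y1).1) ((h2 x1 y2).2.trans (h1 x1 y2).1)
  set xm : Euc n := (2:ℝ)⁻¹ • (x1 + x2) with hxm
  set ym : Euc m := (2:ℝ)⁻¹ • (y1 + y2) with hym
  have hfxm : f xm ≤ (2:ℝ)⁻¹ * f x1 + (2:ℝ)⁻¹ * f x2 := by
    have := hfc.2 (Set.mem_univ x1) (Set.mem_univ x2)
      (by norm_num : (0:ℝ) ≤ 2⁻¹) (by norm_num : (0:ℝ) ≤ 2⁻¹) (by norm_num)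
    simpa [hxm, smul_add, smul_smul] using this
  have hgym : g ym ≤ (2:ℝ)⁻¹ * g y1 + (2:ℝ)⁻¹ * g y2 := by
    have := hgc.2 (Set.mem_univ y1) (Set.mem_univ y2)
      (by norm_num : (0:ℝ) ≤ 2⁻¹) (by norm_num : (0:ℝ) ≤ 2⁻¹) (by norm_num)
    simpa [hym, smul_add, smul_smul] using this
  have hinner : ∀ y : Euc m, ⟪K xm, y⟫ = (2:ℝ)⁻¹ * ⟪K x1, y⟫ + (2:ℝ)⁻¹ * ⟪K x2, y⟫ := by
    intro y
    have hK : K xm = (2:ℝ)⁻¹ • K x1 + (2:ℝ)⁻¹ • K x2 := by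
      rw [hxm, smul_add, map_add, K.map_smul, K.map_smul]
    rw [hK, inner_add_left, real_inner_smul_left, real_inner_smul_left]
  have hinner' : ∀ x : Euc n, ⟪K x, ym⟫ = (2:ℝ)⁻¹ * ⟪K x, y1⟫ + (2:ℝ)⁻¹ * ⟪K x, y2⟫ := by
    intro x
    rw [hym, smul_add, inner_add_right, inner_smul_right_eq_smul, inner_smul_right_eq_smul]
    rfl
  have hA : ∀ y : Euc m, Lag f g K xm y ≤ v1 := by
    intro y
    have e1 : Lag f g K x1 y ≤ v1 := (h1 x1 y).1
    have e2 : Lag f g K x2 y ≤ v2 := (h2 x2 y).1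
    simp only [Lag] at e1 e2 ⊢
    rw [hinner y]
    nlinarith [hfxm]
  have hB : ∀ x : Euc n, v1 ≤ Lag f g K x ym := by
    intro x
    have e1 : v1 ≤ Lag f g K x y1 := (h1 x y1).2
    have e2 : v2 ≤ Lag f g K x y2 := (h2 x y2).2
    simp only [Lag] at e1 e2 ⊢
    rw [hinner' x]
    nlinarith [hgym]
  have hm : Lag f g K xm ym = v1 := le_antisymm (hA ym) (hB xm)
  intro x y
  exact ⟨(hA y).trans hm.ge, hm.le.trans (hB x)⟩


set_option maxHeartbeats 1000000 in
/-- convergence of the Tikhonov curve `(x_t, y_t)` to the minimal norm saddle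
point and the norm bound `‖(x_t,y_t)‖ ≤ ‖(x̄*,ȳ*)‖`. -/
theorem stmt6
    {n m : ℕ}
    (f : Euc n → ℝ) (g : Euc m → ℝ) (K : Euc n →L[ℝ] Euc m)
    (hf : ContDiff ℝ 2 f) (hg : ContDiff ℝ 2 g)
    (hfc : ConvexOn ℝ Set.univ f) (hgc : ConvexOn ℝ Set.univ g)
    (c p t₀ : ℝ) (hc : 0 < c) (hp0 : 0 < p) (hp1 : p < 1) (ht₀ : 0 < t₀)
    (xt : ℝ → Euc n) (yt : ℝ → Euc m)
    (hsad : ∀ t ≥ t₀, IsSaddle (LagT f g K c p t) (xt t) (yt t))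
    (xb : Euc n) (yb : Euc m)
    (hb : IsSaddle (Lag f g K) xb yb)
    (hmin : ∀ xs : Euc n, ∀ ys : Euc m, IsSaddle (Lag f g K) xs ys →
      Real.sqrt (‖xb‖ ^ 2 + ‖yb‖ ^ 2) ≤ Real.sqrt (‖xs‖ ^ 2 + ‖ys‖ ^ 2)) :
    Tendsto (fun t => Real.sqrt (‖xt t - xb‖ ^ 2 + ‖yt t - yb‖ ^ 2)) atTop (nhds 0) ∧
      ∀ t ≥ t₀, Real.sqrt (‖xt t‖ ^ 2 + ‖yt t‖ ^ 2) ≤ Real.sqrt (‖xb‖ ^ 2 + ‖yb‖ ^ 2) := by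
  set R2 : ℝ := ‖xb‖ ^ 2 + ‖yb‖ ^ 2 with hR2def
  have hR2nn : 0 ≤ R2 := by positivity
  -- Part 1: the norm bound
  have hbound : ∀ t ≥ t₀, ‖xt t‖ ^ 2 + ‖yt t‖ ^ 2 ≤ R2 := by
    intro t ht
    have htpos : 0 < t := lt_of_lt_of_le ht₀ ht
    have hrp : 0 < t ^ p := Real.rpow_pos_of_pos htpos p
    have hεpos : 0 < c / (2 * t ^ p) := div_pos hc (by linarith)
    have h1 : LagT f g K c p t (xt t) yb ≤ LagT f g K c p t xb (yt t) :=
      ((hsad t ht xb yb).1).trans ((hsad t ht xb yb).2)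
    have h2 : Lag f g K xb (yt t) ≤ Lag f g K (xt t) yb :=
      ((hb (xt t) (yt t)).1).trans ((hb (xt t) (yt t)).2)
    simp only [LagT] at h1
    nlinarith [h1, h2, hεpos]
  refine ⟨?_, fun t ht => Real.sqrt_le_sqrt (hbound t ht)⟩
  -- the truncated curve
  set F : ℝ → Euc n := fun t => if t₀ ≤ t then xt t else xb with hFdef
  set G : ℝ → Euc m := fun t => if t₀ ≤ t then yt t else yb with hGdef
  have hFG : ∀ t, ‖F t‖ ^ 2 + ‖G t‖ ^ 2 ≤ R2 := by
    intro t
    by_cases h : t₀ ≤ t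
    · simpa [hFdef, hGdef, h] using hbound t h
    · simp [hFdef, hGdef, h, hR2def]
  have main : Tendsto (fun t => ‖F t - xb‖ ^ 2 + ‖G t - yb‖ ^ 2) atTop (nhds 0) := by
    apply tendsto_of_subseq_tendsto
    intro u hu
    set R : ℝ := Real.sqrt R2 with hRdef
    have hmem : ∀ k : ℕ, (F (u k), G (u k)) ∈
        (Metric.closedBall (0 : Euc n) R) ×ˢ (Metric.closedBall (0 : Euc m) R) := by
      intro k
      have h1 : ‖F (u k)‖ ^ 2 ≤ R2 := by nlinarith [hFG (u k), sq_nonneg ‖G (u k)‖]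
      have h2 : ‖G (u k)‖ ^ 2 ≤ R2 := by nlinarith [hFG (u k), sq_nonneg ‖F (u k)‖]
      constructor
      · simp only [Metric.mem_closedBall, dist_zero_right]
        rw [hRdef, ← Real.sqrt_sq (norm_nonneg (F (u k)))]
        exact Real.sqrt_le_sqrt h1
      · simp only [Metric.mem_closedBall, dist_zero_right]
        rw [hRdef, ← Real.sqrt_sq (norm_nonneg (G (u k)))]
        exact Real.sqrt_le_sqrt h2
    obtain ⟨z, hzmem, φ, hφ, hconv⟩ :=
      ((isCompact_closedBall (0 : Euc n) R).prod
        (isCompact_closedBall (0 : Euc m) R)).tendsto_subseq hmem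
    refine ⟨φ, ?_⟩
    set s : ℕ → ℝ := fun k => u (φ k) with hsdef
    have hs : Tendsto s atTop atTop := hu.comp hφ.tendsto_atTop
    have hsge : ∀ᶠ k in atTop, t₀ ≤ s k := hs.eventually (eventually_ge_atTop t₀)
    have hxconv : Tendsto (fun k => F (s k)) atTop (nhds z.1) :=
      (continuous_fst.tendsto z).comp hconv
    have hyconv : Tendsto (fun k => G (s k)) atTop (nhds z.2) :=
      (continuous_snd.tendsto z).comp hconv
    have hxconv' : Tendsto (fun k => xt (s k)) atTop (nhds z.1) := by
      apply hxconv.congr'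
      filter_upwards [hsge] with k hk
      simp [hFdef, hk]
    have hyconv' : Tendsto (fun k => yt (s k)) atTop (nhds z.2) := by
      apply hyconv.congr'
      filter_upwards [hsge] with k hk
      simp [hGdef, hk]
    -- ε(t) → 0
    have hε : Tendsto (fun k => c / (2 * s k ^ p)) atTop (nhds 0) := by
      apply Filter.Tendsto.div_atTop (tendsto_const_nhds)
      exact Filter.Tendsto.const_mul_atTop two_pos ((tendsto_rpow_atTop hp0).comp hs)
    -- continuity of Lag
    have hcx : ∀ y : Euc m, Continuous fun x => Lag f g K x y := by
      intro y
      exact (hf.continuous.add ((K.continuous.inner continuous_const))).sub continuous_const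
    have hcy : ∀ x : Euc n, Continuous fun y => Lag f g K x y := by
      intro x
      exact (continuous_const.add ((continuous_const.inner continuous_id))).sub hg.continuous
    -- the cluster point is a saddle point of Lag
    have hkey : ∀ x : Euc n, ∀ y : Euc m, Lag f g K z.1 y ≤ Lag f g K x z.2 := by
      intro x y
      have hev : ∀ᶠ k in atTop,
          Lag f g K (xt (s k)) y + c / (2 * s k ^ p) * (‖xt (s k)‖ ^ 2 - ‖y‖ ^ 2)
            ≤ Lag f g K x (yt (s k)) + c / (2 * s k ^ p) * (‖x‖ ^ 2 - ‖yt (s k)‖ ^ 2) := by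
        filter_upwards [hsge] with k hk
        have h1 : LagT f g K c p (s k) (xt (s k)) y ≤ LagT f g K c p (s k) x (yt (s k)) :=
          ((hsad (s k) hk x y).1).trans ((hsad (s k) hk x y).2)
        simpa [LagT] using h1
      have hL1 : Tendsto
          (fun k => Lag f g K (xt (s k)) y + c / (2 * s k ^ p) * (‖xt (s k)‖ ^ 2 - ‖y‖ ^ 2))
          atTop (nhds (Lag f g K z.1 y)) := by
        have ha : Tendsto (fun k => Lag f g K (xt (s k)) y) atTop (nhds (Lag f g K z.1 y)) :=
          ((hcx y).tendsto z.1).comp hxconv'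
        have hb2 : Tendsto (fun k => c / (2 * s k ^ p) * (‖xt (s k)‖ ^ 2 - ‖y‖ ^ 2))
            atTop (nhds 0) := by
          have hn : Tendsto (fun k => ‖xt (s k)‖ ^ 2 - ‖y‖ ^ 2)
              atTop (nhds (‖z.1‖ ^ 2 - ‖y‖ ^ 2)) :=
            (((continuous_norm.pow 2).sub continuous_const).tendsto z.1).comp hxconv'
          simpa using hε.mul hn
        simpa using ha.add hb2
      have hL2 : Tendsto
          (fun k => Lag f g K x (yt (s k)) + c / (2 * s k ^ p) * (‖x‖ ^ 2 - ‖yt (s k)‖ ^ 2))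
          atTop (nhds (Lag f g K x z.2)) := by
        have ha : Tendsto (fun k => Lag f g K x (yt (s k))) atTop (nhds (Lag f g K x z.2)) :=
          ((hcy x).tendsto z.2).comp hyconv'
        have hb2 : Tendsto (fun k => c / (2 * s k ^ p) * (‖x‖ ^ 2 - ‖yt (s k)‖ ^ 2))
            atTop (nhds 0) := by
          have hn : Tendsto (fun k => ‖x‖ ^ 2 - ‖yt (s k)‖ ^ 2)
              atTop (nhds (‖x‖ ^ 2 - ‖z.2‖ ^ 2)) :=
            ((continuous_const.sub (continuous_norm.pow 2)).tendsto z.2).comp hyconv'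
          simpa using hε.mul hn
        simpa using ha.add hb2
      exact le_of_tendsto_of_tendsto hL1 hL2 hev
    have hzsad : IsSaddle (Lag f g K) z.1 z.2 := fun x y => ⟨hkey z.1 y, hkey x z.2⟩
    -- the cluster point has norm ≤ minimal norm
    have hzle : ‖z.1‖ ^ 2 + ‖z.2‖ ^ 2 ≤ R2 := by
      have hn : Tendsto (fun k => ‖F (s k)‖ ^ 2 + ‖G (s k)‖ ^ 2)
          atTop (nhds (‖z.1‖ ^ 2 + ‖z.2‖ ^ 2)) :=
        ((continuous_norm.pow 2).tendsto z.1).comp hxconv |>.add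
          (((continuous_norm.pow 2).tendsto z.2).comp hyconv)
      exact le_of_tendsto hn (Eventually.of_forall fun k => hFG (s k))
    -- midpoint argument forces z = (xb, yb)
    have hmid := midpoint_saddle f g K hfc hgc hzsad hb
    have hminmid := hmin _ _ hmid
    have hmid2 : R2 ≤ ‖(2:ℝ)⁻¹ • (z.1 + xb)‖ ^ 2 + ‖(2:ℝ)⁻¹ • (z.2 + yb)‖ ^ 2 := by
      have hnn : (0:ℝ) ≤ ‖(2:ℝ)⁻¹ • (z.1 + xb)‖ ^ 2 + ‖(2:ℝ)⁻¹ • (z.2 + yb)‖ ^ 2 := by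
        positivity
      nlinarith [Real.sq_sqrt hR2nn, Real.sq_sqrt hnn, hminmid, Real.sqrt_nonneg R2,
        Real.sqrt_nonneg (‖(2:ℝ)⁻¹ • (z.1 + xb)‖ ^ 2 + ‖(2:ℝ)⁻¹ • (z.2 + yb)‖ ^ 2)]
    have hpar1 := parallelogram_law_with_norm ℝ z.1 xb
    have hpar2 := parallelogram_law_with_norm ℝ z.2 yb
    have hsm1 : ‖(2:ℝ)⁻¹ • (z.1 + xb)‖ = 2⁻¹ * ‖z.1 + xb‖ := by
      rw [norm_smul]; norm_num
    have hsm2 : ‖(2:ℝ)⁻¹ • (z.2 + yb)‖ = 2⁻¹ * ‖z.2 + yb‖ := by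
      rw [norm_smul]; norm_num
    have hd : ‖z.1 - xb‖ ^ 2 + ‖z.2 - yb‖ ^ 2 ≤ 0 := by
      rw [hsm1, hsm2] at hmid2
      nlinarith [hmid2, hzle, hpar1, hpar2]
    have hz1 : z.1 = xb := by
      have h0 : ‖z.1 - xb‖ = 0 := by
        nlinarith [norm_nonneg (z.1 - xb), norm_nonneg (z.2 - yb), sq_nonneg ‖z.2 - yb‖]
      rwa [norm_sub_eq_zero_iff] at h0
    have hz2 : z.2 = yb := by
      have h0 : ‖z.2 - yb‖ = 0 := by
        nlinarith [norm_nonneg (z.1 - xb), norm_nonneg (z.2 - yb), sq_nonneg ‖z.1 - xb‖]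
      rwa [norm_sub_eq_zero_iff] at h0
    -- conclude the subsequence converges to 0
    have hlim : Tendsto (fun k => ‖F (s k) - xb‖ ^ 2 + ‖G (s k) - yb‖ ^ 2)
        atTop (nhds (‖z.1 - xb‖ ^ 2 + ‖z.2 - yb‖ ^ 2)) :=
      ((((continuous_id.sub continuous_const).norm.pow 2).tendsto z.1).comp hxconv).add
        ((((continuous_id.sub continuous_const).norm.pow 2).tendsto z.2).comp hyconv)
    rw [hz1, hz2] at hlim
    simpa using hlim
  have hsq := (Real.continuous_sqrt.tendsto 0).comp main
  have hFt : Tendsto (fun t => Real.sqrt (‖F t - xb‖ ^ 2 + ‖G t - yb‖ ^ 2)) atTop (nhds 0) := by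
    simpa [Function.comp_def] using hsq
  apply hFt.congr'
  filter_upwards [eventually_ge_atTop t₀] with t ht
  simp [hFdef, hGdef, ht]
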